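/- Let A be a semiprime Archimedean f-algebra (over ℝ) which is geometric mean closed. Then for all f, g ∈ A⁺, the element f ⊠ g = 2⁻¹·inf{θ·f + θ⁻¹·g : θ ∈ (0,∞)} satisfies (f ⊠ g)² = f·g; i.e., f ⊠ g is the (unique nonnegative) square root of f·g. -/

import Mathlib

set_option linter.unusedSectionVars false
set_option maxHeartbeats 1000000

section GMHelpers
variable {A : Type*} [NonUnitalCommRing A] [Lattice A]
    [CovariantClass A A (· + ·) (· ≤ ·)]
    [Module ℝ A] [PosSMulMono ℝ A]
    [IsScalarTower ℝ A A] [SMulCommClass ℝ A A]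

/-- multiplication by a nonnegative element is monotone -/
lemma gmaux_mul_le (hmulpos : ∀ a b : A, 0 ≤ a → 0 ≤ b → 0 ≤ a * b)
    {a b c : A} (hab : a ≤ b) (hc : 0 ≤ c) : c * a ≤ c * b := by
  have h := hmulpos c (b - a) hc (by simpa using hab)
  rw [mul_sub] at h
  exact sub_nonneg.mp h

/-- positive scalar multiplication distributes over inf -/
lemma gmaux_smul_inf {c : ℝ} (hc : 0 < c) (x y : A) :
    c • (x ⊓ y) = c • x ⊓ c • y := by
  apply le_antisymm
  · exact le_inf (smul_le_smul_of_nonneg_left inf_le_left hc.le)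
      (smul_le_smul_of_nonneg_left inf_le_right hc.le)
  · have h1 : c⁻¹ • (c • x ⊓ c • y) ≤ x := by
      have := smul_le_smul_of_nonneg_left (inf_le_left (a := c • x) (b := c • y))
        (inv_nonneg.mpr hc.le)
      rwa [inv_smul_smul₀ hc.ne'] at this
    have h2 : c⁻¹ • (c • x ⊓ c • y) ≤ y := by
      have := smul_le_smul_of_nonneg_left (inf_le_right (a := c • x) (b := c • y))
        (inv_nonneg.mpr hc.le)
      rwa [inv_smul_smul₀ hc.ne'] at this
    have := smul_le_smul_of_nonneg_left (le_inf h1 h2) hc.le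
    rwa [smul_inv_smul₀ hc.ne'] at this

/-- disjoint elements multiply to zero -/
lemma gmaux_disj_mul (hfalg : ∀ a b c : A, a ⊓ b = 0 → 0 ≤ c → (c * a) ⊓ b = 0)
    {a b : A} (h : a ⊓ b = 0) : a * b = 0 := by
  have ha : 0 ≤ a := h ▸ inf_le_left
  have h1 : (b * a) ⊓ b = 0 := hfalg a b b h (h ▸ inf_le_right)
  have h2 : b ⊓ (b * a) = 0 := by rwa [inf_comm] at h1
  have h3 : (a * b) ⊓ (b * a) = 0 := hfalg b (b * a) a h2 ha
  rw [mul_comm b a] at h3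
  simpa using h3

/-- translation distributes over inf -/
lemma gmaux_add_inf (a x y : A) : a + (x ⊓ y) = (a + x) ⊓ (a + y) := by
  apply le_antisymm
  · exact le_inf (add_le_add (le_refl a) inf_le_left) (add_le_add (le_refl a) inf_le_right)
  · have h1 : (a + x) ⊓ (a + y) - a ≤ x := by
      rw [sub_le_iff_le_add, add_comm x a]; exact inf_le_left
    have h2 : (a + x) ⊓ (a + y) - a ≤ y := by
      rw [sub_le_iff_le_add, add_comm y a]; exact inf_le_right
    have := add_le_add (le_refl a) (le_inf h1 h2)
    simpa using this

/-- multiplication by a nonnegative element distributes over inf -/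
lemma gmaux_mul_inf (hfalg : ∀ a b c : A, a ⊓ b = 0 → 0 ≤ c → (c * a) ⊓ b = 0)
    {c : A} (hc : 0 ≤ c) (x y : A) : c * (x ⊓ y) = (c * x) ⊓ (c * y) := by
  set w := x ⊓ y with hw
  have hd : (x - w) ⊓ (y - w) = 0 := by
    have h := gmaux_add_inf (-w) x y
    simp only [neg_add_eq_sub] at h
    rw [← h, hw, sub_self]
  have h1 : (c * (x - w)) ⊓ (y - w) = 0 := hfalg (x - w) (y - w) c hd hc
  have h2 : (y - w) ⊓ (c * (x - w)) = 0 := by rwa [inf_comm] at h1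
  have h3 : (c * (y - w)) ⊓ (c * (x - w)) = 0 := hfalg (y - w) (c * (x - w)) c h2 hc
  have h4 : (c * (x - w)) ⊓ (c * (y - w)) = 0 := by rwa [inf_comm] at h3
  have ex : c * x = c * w + c * (x - w) := by rw [mul_sub]; abel
  have ey : c * y = c * w + c * (y - w) := by rw [mul_sub]; abel
  rw [ex, ey, ← gmaux_add_inf, h4, add_zero]

/-- squares are nonnegative -/
lemma gmaux_sq_nonneg (hmulpos : ∀ a b : A, 0 ≤ a → 0 ≤ b → 0 ≤ a * b)
    (hfalg : ∀ a b c : A, a ⊓ b = 0 → 0 ≤ c → (c * a) ⊓ b = 0)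
    (a : A) : 0 ≤ a * a := by
  have hd : a⁺ ⊓ a⁻ = 0 := posPart_inf_negPart_eq_zero a
  have hz : a⁺ * a⁻ = 0 := gmaux_disj_mul hfalg hd
  have hz' : a⁻ * a⁺ = 0 := by rw [mul_comm]; exact hz
  have hrw : a * a = a⁺ * a⁺ + a⁻ * a⁻ := by
    calc a * a = (a⁺ - a⁻) * (a⁺ - a⁻) := by rw [posPart_sub_negPart a]
      _ = a⁺ * a⁺ + a⁻ * a⁻ := by
          rw [sub_mul, mul_sub, mul_sub, hz, hz']; abel
  rw [hrw]
  exact add_nonneg (hmulpos _ _ (posPart_nonneg a) (posPart_nonneg a))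
    (hmulpos _ _ (negPart_nonneg a) (negPart_nonneg a))

/-- inf of squares of nonneg elements is at most the product -/
lemma gmaux_inf_sq_le (hmulpos : ∀ a b : A, 0 ≤ a → 0 ≤ b → 0 ≤ a * b)
    (hfalg : ∀ a b c : A, a ⊓ b = 0 → 0 ≤ c → (c * a) ⊓ b = 0)
    {x y : A} (hx : 0 ≤ x) (hy : 0 ≤ y) : (x * x) ⊓ (y * y) ≤ x * y := by
  set w := x ⊓ y with hw
  have hwx : w ≤ x := inf_le_left
  have hwy : w ≤ y := inf_le_right
  have hw0 : 0 ≤ w := le_inf hx hy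
  have hd : (x - w) ⊓ (y - w) = 0 := by
    have h := gmaux_add_inf (-w) x y
    simp only [neg_add_eq_sub] at h
    rw [← h, hw, sub_self]
  set p := x - w with hp
  set q := y - w with hq
  have hp0 : 0 ≤ p := sub_nonneg.mpr hwx
  have hq0 : 0 ≤ q := sub_nonneg.mpr hwy
  have h1 : ((w + w + p) * p) ⊓ q = 0 := hfalg p q (w + w + p) hd (by positivity)
  have h2 : q ⊓ ((w + w + p) * p) = 0 := by rwa [inf_comm] at h1
  have h3 : ((w + w + q) * q) ⊓ ((w + w + p) * p) = 0 :=
    hfalg q ((w + w + p) * p) (w + w + q) h2 (by positivity)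
  have h4 : ((w + w + p) * p) ⊓ ((w + w + q) * q) = 0 := by rwa [inf_comm] at h3
  have ex : x * x = w * w + (w + w + p) * p := by
    rw [hp, show w + w + (x - w) = w + x by abel, add_mul, mul_sub, mul_sub,
      mul_comm w x]; abel
  have ey : y * y = w * w + (w + w + q) * q := by
    rw [hq, show w + w + (y - w) = w + y by abel, add_mul, mul_sub, mul_sub,
      mul_comm w y]; abel
  have key : (x * x) ⊓ (y * y) = w * w := by
    rw [ex, ey, ← gmaux_add_inf, h4, add_zero]
  rw [key]
  calc w * w ≤ w * y := gmaux_mul_le hmulpos hwy hw0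
    _ = y * w := mul_comm w y
    _ ≤ y * x := gmaux_mul_le hmulpos hwx hy
    _ = x * y := mul_comm y x

/-- order is determined by squares, in a semiprime f-algebra -/
lemma gmaux_sqrt_mono (hmulpos : ∀ a b : A, 0 ≤ a → 0 ≤ b → 0 ≤ a * b)
    (hfalg : ∀ a b c : A, a ⊓ b = 0 → 0 ≤ c → (c * a) ⊓ b = 0)
    (hsemiprime : ∀ a : A, a * a = 0 → a = 0)
    {x y : A} (hx : 0 ≤ x) (hy : 0 ≤ y) (h : x * x ≤ y * y) : x ≤ y := by
  have hdisj : (x - y)⁺ ⊓ (x - y)⁻ = 0 := posPart_inf_negPart_eq_zero (x - y)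
  set c := (x - y)⁺ with hcdef
  have hc0 : 0 ≤ c := posPart_nonneg _
  have hz : c * (x - y)⁻ = 0 := gmaux_disj_mul hfalg hdisj
  have hcd : c * (x - y) = c * c := by
    conv_lhs => rw [← posPart_sub_negPart (x - y)]
    rw [mul_sub, hz, sub_zero, hcdef]
  have hcc0 : 0 ≤ c * c := hmulpos c c hc0 hc0
  have hxy : (x + y) * (c * c) = c * (x * x - y * y) := by
    calc (x + y) * (c * c) = (x + y) * (c * (x - y)) := by rw [hcd]
      _ = c * ((x + y) * (x - y)) := by rw [mul_left_comm]
      _ = c * (x * x - y * y) := by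
          congr 1
          rw [add_mul, mul_sub, mul_sub, mul_comm y x]
          abel
  have h3 : 0 ≤ (x + y) * (c * c) := hmulpos _ _ (add_nonneg hx hy) hcc0
  have h4 : (x + y) * (c * c) ≤ 0 := by
    rw [hxy]
    have h5 : 0 ≤ c * (y * y - x * x) := hmulpos _ _ hc0 (sub_nonneg.mpr h)
    have he : c * (x * x - y * y) = -(c * (y * y - x * x)) := by
      rw [mul_sub, mul_sub]; abel
    rw [he]
    exact neg_nonpos.mpr h5
  have hsum0 : (x + y) * (c * c) = 0 := le_antisymm h4 h3
  have hxcc : x * (c * c) = 0 := by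
    have hx' : 0 ≤ x * (c * c) := hmulpos _ _ hx hcc0
    have hy' : 0 ≤ y * (c * c) := hmulpos _ _ hy hcc0
    have hadd : x * (c * c) + y * (c * c) = 0 := by rw [← add_mul]; exact hsum0
    have hle : x * (c * c) ≤ 0 := by
      calc x * (c * c) ≤ x * (c * c) + y * (c * c) := le_add_of_nonneg_right hy'
        _ = 0 := hadd
    exact le_antisymm hle hx'
  have hcx : c ≤ x := by
    rw [hcdef, posPart_def]
    exact sup_le (by simpa using sub_le_self x hy) hx
  have hc3 : (c * c) * c = 0 := by
    have hle : (c * c) * c ≤ (c * c) * x := gmaux_mul_le hmulpos hcx hcc0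
    have hcc : (c * c) * x = 0 := by rw [mul_comm]; exact hxcc
    rw [hcc] at hle
    exact le_antisymm hle (hmulpos _ _ hcc0 hc0)
  have hc4 : (c * c) * (c * c) = 0 := by rw [← mul_assoc, hc3, zero_mul]
  have hcz : c = 0 := hsemiprime c (hsemiprime (c * c) hc4)
  exact sub_nonpos.mp (posPart_eq_zero.mp hcz)

/-- AM-GM: 2•(f*g) ≤ u•(f*f) + u⁻¹•(g*g) -/
lemma gmaux_amgm (hmulpos : ∀ a b : A, 0 ≤ a → 0 ≤ b → 0 ≤ a * b)
    (hfalg : ∀ a b c : A, a ⊓ b = 0 → 0 ≤ c → (c * a) ⊓ b = 0)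
    (f g : A) {u : ℝ} (hu : 0 < u) :
    (2:ℝ) • (f * g) ≤ u • (f * f) + u⁻¹ • (g * g) := by
  have hsq : 0 ≤ (u • f - g) * (u • f - g) := gmaux_sq_nonneg hmulpos hfalg _
  have h0 : 0 ≤ u⁻¹ • ((u • f - g) * (u • f - g)) :=
    smul_nonneg (inv_nonneg.mpr hu.le) hsq
  have hid : u⁻¹ • ((u • f - g) * (u • f - g))
      = (u • (f * f) + u⁻¹ • (g * g)) - (2:ℝ) • (f * g) := by
    simp only [sub_mul, mul_sub, smul_mul_assoc, mul_smul_comm, smul_smul, smul_sub,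
      mul_comm g f]
    match_scalars
    all_goals (field_simp; try ring)
  rw [hid] at h0
  exact sub_nonneg.mp h0

/-- twice the scaled inf is a lower bound of the whole family -/
lemma gmaux_two_inf_le {a b : A} (ha : 0 ≤ a) (hb : 0 ≤ b)
    {σ θ : ℝ} (hσ : 0 < σ) (hθ : 0 < θ) :
    (2:ℝ) • (σ • a ⊓ σ⁻¹ • b) ≤ θ • a + θ⁻¹ • b := by
  set w := σ • a ⊓ σ⁻¹ • b with hwdef
  have hw0 : 0 ≤ w := le_inf (smul_nonneg hσ.le ha) (smul_nonneg (inv_nonneg.mpr hσ.le) hb)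
  have h1 : (θ/σ) • w ≤ θ • a := by
    have := smul_le_smul_of_nonneg_left (inf_le_left (a := σ • a) (b := σ⁻¹ • b))
      (le_of_lt (div_pos hθ hσ))
    rwa [smul_smul, div_mul_cancel₀ _ hσ.ne'] at this
  have h2 : (σ/θ) • w ≤ θ⁻¹ • b := by
    have := smul_le_smul_of_nonneg_left (inf_le_right (a := σ • a) (b := σ⁻¹ • b))
      (le_of_lt (div_pos hσ hθ))
    rwa [smul_smul, show σ/θ * σ⁻¹ = θ⁻¹ by field_simp] at this
  have h3 : (2:ℝ) ≤ θ/σ + σ/θ := by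
    rw [div_add_div _ _ hσ.ne' hθ.ne', le_div_iff₀ (mul_pos hσ hθ)]
    nlinarith [sq_nonneg (θ - σ)]
  have h4 : (2:ℝ) • w ≤ (θ/σ + σ/θ) • w := by
    have := smul_nonneg (sub_nonneg.mpr h3) hw0
    rw [sub_smul] at this
    exact sub_nonneg.mp this
  calc (2:ℝ) • w ≤ (θ/σ + σ/θ) • w := h4
    _ = (θ/σ) • w + (σ/θ) • w := add_smul _ _ _
    _ ≤ θ • a + θ⁻¹ • b := add_le_add h1 h2

/-- The key contraction estimate. -/
lemma gmaux_contract (harch : ∀ f g : A, (∀ n : ℕ, (n : ℝ) • f ≤ g) → f ≤ 0)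
    {a b k : A} (hk0 : 0 ≤ k)
    (hk : ∀ σ : ℝ, 0 < σ → σ • a ⊓ σ⁻¹ • b ≤ k) {N : A}
    (hN : IsGLB {x | ∃ θ : ℝ, 0 < θ ∧ x = θ • a + θ⁻¹ • b} N) :
    N ≤ (2:ℝ) • k := by
  have hNle : ∀ θ : ℝ, 0 < θ → N ≤ θ • a + θ⁻¹ • b := fun θ hθ => hN.1 ⟨θ, hθ, rfl⟩
  have key : ∀ s : ℝ, 1 < s → ∀ ρ : ℝ, 0 < ρ →
      s • N - (s^2 - 1) • k ≤ ρ • a + ρ⁻¹ • b := by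
    intro s hs ρ hρ
    have hs0 : 0 < s := lt_trans one_pos hs
    set θ := ρ / s with hθdef
    have hθ : 0 < θ := div_pos hρ hs0
    have hst : 0 < s * θ := mul_pos hs0 hθ
    have hinf : a ⊓ ((s*θ)⁻¹ * (s*θ)⁻¹) • b ≤ (s*θ)⁻¹ • k := by
      have h := smul_le_smul_of_nonneg_left (hk (s*θ) hst) (inv_nonneg.mpr hst.le)
      rw [gmaux_smul_inf (inv_pos.mpr hst), smul_smul, smul_smul,
        inv_mul_cancel₀ hst.ne'] at h
      simpa using h
    set β := (s*θ)⁻¹ * (s*θ)⁻¹ with hβdef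
    set c := (s^2 - 1) * θ with hcdef
    have hc : 0 < c := by
      apply mul_pos _ hθ; nlinarith
    set base := θ • a + (s^2*θ)⁻¹ • b with hbase
    have h1 : N ≤ base + c • a := by
      have h := hNle (s^2*θ) (by positivity)
      have e : (s^2*θ) • a + (s^2*θ)⁻¹ • b = base + c • a := by
        rw [hbase, hcdef]; match_scalars <;> ring
      rwa [e] at h
    have h2 : N ≤ base + (c * β) • b := by
      have h := hNle θ hθ
      have e : θ • a + θ⁻¹ • b = base + (c * β) • b := by
        rw [hbase, hcdef, hβdef]
        match_scalars
        · ring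
        · field_simp
          ring
      rwa [e] at h
    have h3 : N ≤ base + c • (a ⊓ β • b) := by
      calc N ≤ (base + c • a) ⊓ (base + (c * β) • b) := le_inf h1 h2
        _ = base + (c • a ⊓ (c * β) • b) := (gmaux_add_inf _ _ _).symm
        _ = base + c • (a ⊓ β • b) := by rw [gmaux_smul_inf hc, smul_smul]
    have h4 : N ≤ base + c • ((s*θ)⁻¹ • k) :=
      h3.trans (add_le_add (le_refl base) (smul_le_smul_of_nonneg_left hinf hc.le))
    have h5 : s • N ≤ (ρ • a + ρ⁻¹ • b) + (s^2 - 1) • k := by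
      have h := smul_le_smul_of_nonneg_left h4 hs0.le
      have e : s • (base + c • ((s*θ)⁻¹ • k)) = (ρ • a + ρ⁻¹ • b) + (s^2-1) • k := by
        rw [hbase, hcdef, hθdef]
        match_scalars
        all_goals (field_simp; try ring; try tauto)
      rwa [e] at h
    exact sub_le_iff_le_add.mpr h5
  have step : ∀ s : ℝ, 1 < s → (s - 1) • N ≤ (s^2 - 1) • k := by
    intro s hs
    have hlb : s • N - (s^2 - 1) • k ∈
        lowerBounds {x : A | ∃ θ : ℝ, 0 < θ ∧ x = θ • a + θ⁻¹ • b} := by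
      rintro x ⟨ρ, hρ, rfl⟩
      exact key s hs ρ hρ
    have h := hN.2 hlb
    have h' : s • N - N ≤ (s^2 - 1) • k := sub_le_comm.mp h
    calc (s - 1) • N = s • N - N := by rw [sub_smul, one_smul]
      _ ≤ (s^2 - 1) • k := h'
  have final : ∀ n : ℕ, (n : ℝ) • (N - (2:ℝ) • k) ≤ k := by
    intro n
    rcases Nat.eq_zero_or_pos n with h0 | hpos
    · subst h0; simpa using hk0
    · have hn : (0:ℝ) < n := by exact_mod_cast hpos
      have hs : (1:ℝ) < 1 + 1/n := by
        have := one_div_pos.mpr hn; linarith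
      have hstep := step (1 + 1/(n:ℝ)) hs
      have h6 := smul_le_smul_of_nonneg_left hstep hn.le
      rw [smul_smul, smul_smul] at h6
      have e1 : (n:ℝ) * ((1 + 1/n) - 1) = 1 := by field_simp; ring
      have e2 : (n:ℝ) * ((1 + 1/(n:ℝ))^2 - 1) = 2 + 1/n := by field_simp; ring
      rw [e1, e2, one_smul] at h6
      have e3 : ((2:ℝ) + 1/n) • k = (1/(n:ℝ)) • k + (2:ℝ) • k := by
        rw [← add_smul]; ring_nf
      rw [e3] at h6
      have h7 : N - (2:ℝ) • k ≤ (1/(n:ℝ)) • k := sub_le_iff_le_add.mpr h6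
      have h8 := smul_le_smul_of_nonneg_left h7 hn.le
      rw [smul_smul, show (n:ℝ) * (1/n) = 1 by field_simp, one_smul] at h8
      exact h8
  exact sub_nonpos.mp (harch (N - (2:ℝ) • k) k final)

end GMHelpers

/-- **Proposition 2.1 (real case).** In a geometric mean closed semiprime Archimedean
`f`-algebra `A`, for `f, g ∈ A⁺` the element `f ⊠ g = 2⁻¹ ⬝ inf {θ•f + θ⁻¹•g : θ > 0}`
is the unique nonnegative square root of `f * g`. -/
theorem stmt0 {A : Type*} [NonUnitalCommRing A] [Lattice A]
    [CovariantClass A A (· + ·) (· ≤ ·)]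
    [Module ℝ A] [PosSMulMono ℝ A]
    [IsScalarTower ℝ A A] [SMulCommClass ℝ A A]
    (harch : ∀ f g : A, (∀ n : ℕ, (n : ℝ) • f ≤ g) → f ≤ 0)
    (hmulpos : ∀ a b : A, 0 ≤ a → 0 ≤ b → 0 ≤ a * b)
    (hfalg : ∀ a b c : A, a ⊓ b = 0 → 0 ≤ c → (c * a) ⊓ b = 0)
    (hsemiprime : ∀ a : A, a * a = 0 → a = 0)
    (hgm : ∀ f g : A, 0 ≤ f → 0 ≤ g →
      ∃ m, IsGLB {x | ∃ θ : ℝ, 0 < θ ∧ x = θ • f + θ⁻¹ • g} m)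
    (f g : A) (hf : 0 ≤ f) (hg : 0 ≤ g)
    (m : A) (hm : IsGLB {x | ∃ θ : ℝ, 0 < θ ∧ x = θ • f + θ⁻¹ • g} m) :
    0 ≤ (2⁻¹ : ℝ) • m ∧
    ((2⁻¹ : ℝ) • m) * ((2⁻¹ : ℝ) • m) = f * g ∧
    ∀ b : A, 0 ≤ b → b * b = f * g → b = (2⁻¹ : ℝ) • m := by
  -- basic facts
  have hm0 : 0 ≤ m := by
    apply hm.2
    rintro x ⟨θ, hθ, rfl⟩
    exact add_nonneg (smul_nonneg hθ.le hf) (smul_nonneg (inv_nonneg.mpr hθ.le) hg)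
  have hmle : ∀ θ : ℝ, 0 < θ → m ≤ θ • f + θ⁻¹ • g := fun θ hθ => hm.1 ⟨θ, hθ, rfl⟩
  have hL : ∀ σ : ℝ, 0 < σ → σ • f ⊓ σ⁻¹ • g ≤ (2⁻¹:ℝ) • m := by
    intro σ hσ
    have hlb : (2:ℝ) • (σ • f ⊓ σ⁻¹ • g) ∈
        lowerBounds {x : A | ∃ θ : ℝ, 0 < θ ∧ x = θ • f + θ⁻¹ • g} := by
      rintro x ⟨θ, hθ, rfl⟩
      exact gmaux_two_inf_le hf hg hσ hθ
    have h := hm.2 hlb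
    have h2 := smul_le_smul_of_nonneg_left h (by norm_num : (0:ℝ) ≤ 2⁻¹)
    rwa [smul_smul, show (2⁻¹:ℝ) * 2 = 1 by norm_num, one_smul] at h2
  have hfg0 : 0 ≤ f * g := hmulpos f g hf hg
  -- ===== upper bound : m*m ≤ 4•(f*g) =====
  obtain ⟨m2, hm2⟩ := hgm (f * f) (g * g) (hmulpos f f hf hf) (hmulpos g g hg hg)
  have hm2le : m2 ≤ (2:ℝ) • (f * g) := by
    apply gmaux_contract harch hfg0 _ hm2
    intro σ hσ
    set t := Real.sqrt σ with htdef
    have ht : 0 < t := Real.sqrt_pos.mpr hσ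
    have ht2 : t * t = σ := Real.mul_self_sqrt hσ.le
    have e1 : σ • (f * f) = (t • f) * (t • f) := by
      rw [smul_mul_assoc, mul_smul_comm, smul_smul, ht2]
    have e2 : σ⁻¹ • (g * g) = (t⁻¹ • g) * (t⁻¹ • g) := by
      rw [smul_mul_assoc, mul_smul_comm, smul_smul, ← mul_inv, ht2]
    rw [e1, e2]
    have h := gmaux_inf_sq_le hmulpos hfalg (smul_nonneg ht.le hf)
      (smul_nonneg (inv_nonneg.mpr ht.le) hg)
    calc (t • f) * (t • f) ⊓ (t⁻¹ • g) * (t⁻¹ • g) ≤ (t • f) * (t⁻¹ • g) := h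
      _ = f * g := by
          rw [smul_mul_assoc, mul_smul_comm, smul_smul, mul_inv_cancel₀ ht.ne', one_smul]
  have hupper : m * m ≤ (4:ℝ) • (f * g) := by
    have hlb : m * m - (2:ℝ) • (f * g) ∈
        lowerBounds {x : A | ∃ θ : ℝ, 0 < θ ∧ x = θ • (f * f) + θ⁻¹ • (g * g)} := by
      rintro x ⟨u, hu, rfl⟩
      set t := Real.sqrt u with htdef
      have ht : 0 < t := Real.sqrt_pos.mpr hu
      have ht2 : t * t = u := Real.mul_self_sqrt hu.le
      have hq0 : 0 ≤ t • f + t⁻¹ • g :=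
        add_nonneg (smul_nonneg ht.le hf) (smul_nonneg (inv_nonneg.mpr ht.le) hg)
      have hmm : m * m ≤ (t • f + t⁻¹ • g) * (t • f + t⁻¹ • g) := by
        calc m * m ≤ m * (t • f + t⁻¹ • g) := gmaux_mul_le hmulpos (hmle t ht) hm0
          _ = (t • f + t⁻¹ • g) * m := mul_comm _ _
          _ ≤ (t • f + t⁻¹ • g) * (t • f + t⁻¹ • g) :=
              gmaux_mul_le hmulpos (hmle t ht) hq0
      have e : (t • f + t⁻¹ • g) * (t • f + t⁻¹ • g)
          = (u • (f * f) + u⁻¹ • (g * g)) + (2:ℝ) • (f * g) := by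
        rw [← ht2]
        simp only [add_mul, mul_add, smul_mul_assoc, mul_smul_comm, smul_smul,
          mul_comm g f]
        match_scalars
        all_goals (field_simp; try ring)
      rw [e] at hmm
      exact sub_le_iff_le_add.mpr hmm
    have h := hm2.2 hlb
    have h2 : m * m - (2:ℝ) • (f * g) ≤ (2:ℝ) • (f * g) := h.trans hm2le
    have h3 := sub_le_iff_le_add.mp h2
    rwa [← add_smul, show (2:ℝ) + 2 = 4 by norm_num] at h3
  -- ===== lower bound : 4•(f*g) ≤ m*m =====
  have hmm0 : 0 ≤ m * m := hmulpos m m hm0 hm0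
  have key1 : ∀ φ : ℝ, 0 < φ → (4:ℝ) • (f * g) ≤ (φ • f + φ⁻¹ • g) * m := by
    intro φ hφ
    set q := φ • f + φ⁻¹ • g with hqdef
    have hq0 : 0 ≤ q :=
      add_nonneg (smul_nonneg hφ.le hf) (smul_nonneg (inv_nonneg.mpr hφ.le) hg)
    obtain ⟨N, hN⟩ := hgm (q * f) (q * g) (hmulpos q f hq0 hf) (hmulpos q g hq0 hg)
    have hqm0 : 0 ≤ (2⁻¹:ℝ) • (q * m) :=
      smul_nonneg (by norm_num) (hmulpos q m hq0 hm0)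
    have hNle : N ≤ (2:ℝ) • ((2⁻¹:ℝ) • (q * m)) := by
      apply gmaux_contract harch hqm0 _ hN
      intro σ hσ
      have e1 : σ • (q * f) = q * (σ • f) := (mul_smul_comm σ q f).symm
      have e2 : σ⁻¹ • (q * g) = q * (σ⁻¹ • g) := (mul_smul_comm _ q g).symm
      rw [e1, e2, ← gmaux_mul_inf hfalg hq0]
      calc q * (σ • f ⊓ σ⁻¹ • g) ≤ q * ((2⁻¹:ℝ) • m) :=
            gmaux_mul_le hmulpos (hL σ hσ) hq0
        _ = (2⁻¹:ℝ) • (q * m) := mul_smul_comm _ q m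
    rw [smul_smul, show (2:ℝ) * 2⁻¹ = 1 by norm_num, one_smul] at hNle
    have h4fg : (4:ℝ) • (f * g) ∈
        lowerBounds {x : A | ∃ θ : ℝ, 0 < θ ∧ x = θ • (q * f) + θ⁻¹ • (q * g)} := by
      rintro x ⟨θ, hθ, rfl⟩
      have e : θ • (q * f) + θ⁻¹ • (q * g)
          = ((φ*θ) • (f * f) + (φ*θ)⁻¹ • (g * g)) + (φ*θ⁻¹ + φ⁻¹*θ) • (f * g) := by
        rw [hqdef]
        simp only [add_mul, mul_add, smul_mul_assoc, mul_smul_comm, smul_smul,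
          mul_comm g f]
        match_scalars
        all_goals (field_simp; try ring)
      rw [e]
      have h1 : (2:ℝ) • (f * g) ≤ (φ*θ) • (f * f) + (φ*θ)⁻¹ • (g * g) :=
        gmaux_amgm hmulpos hfalg f g (mul_pos hφ hθ)
      have hc2 : (2:ℝ) ≤ φ*θ⁻¹ + φ⁻¹*θ := by
        rw [show φ*θ⁻¹ + φ⁻¹*θ = (φ^2 + θ^2)/(φ*θ) by field_simp,
          le_div_iff₀ (mul_pos hφ hθ)]
        nlinarith [sq_nonneg (φ - θ)]
      have h2 : (2:ℝ) • (f * g) ≤ (φ*θ⁻¹ + φ⁻¹*θ) • (f * g) := by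
        have := smul_nonneg (sub_nonneg.mpr hc2) hfg0
        rw [sub_smul] at this
        exact sub_nonneg.mp this
      calc (4:ℝ) • (f * g) = (2:ℝ) • (f * g) + (2:ℝ) • (f * g) := by
            rw [← add_smul]; norm_num
        _ ≤ ((φ*θ) • (f * f) + (φ*θ)⁻¹ • (g * g)) + (φ*θ⁻¹ + φ⁻¹*θ) • (f * g) :=
            add_le_add h1 h2
    exact (hN.2 h4fg).trans hNle
  obtain ⟨M, hM⟩ := hgm (m * f) (m * g) (hmulpos m f hm0 hf) (hmulpos m g hm0 hg)
  have hMle : M ≤ m * m := by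
    have h := gmaux_contract harch (smul_nonneg (by norm_num : (0:ℝ) ≤ 2⁻¹) hmm0) ?_ hM
    · rwa [smul_smul, show (2:ℝ) * 2⁻¹ = 1 by norm_num, one_smul] at h
    · intro σ hσ
      have e1 : σ • (m * f) = m * (σ • f) := (mul_smul_comm σ m f).symm
      have e2 : σ⁻¹ • (m * g) = m * (σ⁻¹ • g) := (mul_smul_comm _ m g).symm
      rw [e1, e2, ← gmaux_mul_inf hfalg hm0]
      calc m * (σ • f ⊓ σ⁻¹ • g) ≤ m * ((2⁻¹:ℝ) • m) :=
            gmaux_mul_le hmulpos (hL σ hσ) hm0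
        _ = (2⁻¹:ℝ) • (m * m) := mul_smul_comm _ m m
  have hlower : (4:ℝ) • (f * g) ≤ m * m := by
    have h4fg : (4:ℝ) • (f * g) ∈
        lowerBounds {x : A | ∃ θ : ℝ, 0 < θ ∧ x = θ • (m * f) + θ⁻¹ • (m * g)} := by
      rintro x ⟨φ, hφ, rfl⟩
      have e : φ • (m * f) + φ⁻¹ • (m * g) = (φ • f + φ⁻¹ • g) * m := by
        rw [add_mul, smul_mul_assoc, smul_mul_assoc, mul_comm f m, mul_comm g m]
      rw [e]
      exact key1 φ hφ
    exact (hM.2 h4fg).trans hMle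
  have hsq : m * m = (4:ℝ) • (f * g) := le_antisymm hupper hlower
  -- ===== conclusion =====
  have hs0 : 0 ≤ (2⁻¹:ℝ) • m := smul_nonneg (by norm_num) hm0
  have hss : ((2⁻¹:ℝ) • m) * ((2⁻¹:ℝ) • m) = f * g := by
    rw [smul_mul_assoc, mul_smul_comm, smul_smul, hsq, smul_smul]
    norm_num
  refine ⟨hs0, hss, ?_⟩
  intro b hb hbb
  have h1 : b ≤ (2⁻¹:ℝ) • m :=
    gmaux_sqrt_mono hmulpos hfalg hsemiprime hb hs0 (by rw [hbb, hss])
  have h2 : (2⁻¹:ℝ) • m ≤ b :=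
    gmaux_sqrt_mono hmulpos hfalg hsemiprime hs0 hb (by rw [hbb, hss])
  exact le_antisymm h1 h2
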